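/- Let r = ⌈log n / log log n⌉ and suppose D_{r+1} ≤ D_1 / r^r where D_1 = H - L > 0. Then for sufficiently large n, D_{r+1} ≤ (H - L)/√n, and consequently if additionally D_{2r+1} ≤ D_{r+1} / r^r then D_{2r+1} ≤ (H - L)/n. -/

import Mathlib

theorem stmt_8 :
    ∃ N : ℕ, ∀ n : ℕ, N ≤ n →
      ∀ (L H : ℝ) (D : ℕ → ℝ), L < H → (∀ i, 0 ≤ D i) → D 1 = H - L →
        ∀ r : ℕ, r = ⌈Real.log n / Real.log (Real.log n)⌉₊ →
          D (r + 1) ≤ D 1 / (r : ℝ) ^ r →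
            D (r + 1) ≤ (H - L) / Real.sqrt n ∧
              (D (2 * r + 1) ≤ D (r + 1) / (r : ℝ) ^ r → D (2 * r + 1) ≤ (H - L) / n) := by
  refine ⟨⌈Real.exp (Real.exp 2)⌉₊ + 1, ?_⟩
  intro n hn L H D hLH hD0 hD1 r hr hDr
  have hnR : Real.exp (Real.exp 2) ≤ (n : ℝ) := by
    calc Real.exp (Real.exp 2) ≤ (⌈Real.exp (Real.exp 2)⌉₊ : ℝ) := Nat.le_ceil _
    _ ≤ (n : ℝ) := by exact_mod_cast le_trans (Nat.le_succ _) hn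
  have hnpos : (0:ℝ) < n := lt_of_lt_of_le (Real.exp_pos _) hnR
  have hlogn : Real.exp 2 ≤ Real.log n := by
    calc Real.exp 2 = Real.log (Real.exp (Real.exp 2)) := (Real.log_exp _).symm
    _ ≤ Real.log n := Real.log_le_log (Real.exp_pos _) hnR
  have hlogn_pos : 0 < Real.log n := lt_of_lt_of_le (Real.exp_pos _) hlogn
  set t := Real.log (Real.log n) with ht_def
  have ht2 : 2 ≤ t := by
    calc (2:ℝ) = Real.log (Real.exp 2) := (Real.log_exp _).symm
    _ ≤ t := Real.log_le_log (Real.exp_pos _) hlogn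
  have htpos : 0 < t := lt_of_lt_of_le two_pos ht2
  set x := Real.log n / t with hx_def
  have hxpos : 0 < x := div_pos hlogn_pos htpos
  have hxr : x ≤ (r : ℝ) := by rw [hr]; exact Nat.le_ceil _
  have hrpos : 0 < (r : ℝ) := lt_of_lt_of_le hxpos hxr
  -- log t ≤ t / 2
  have hlogt : Real.log t ≤ t / 2 := by
    have hs : Real.sqrt t ^ 2 = t := Real.sq_sqrt htpos.le
    have hspos : 0 < Real.sqrt t := Real.sqrt_pos.mpr htpos
    have h1 : Real.log (Real.sqrt t) ≤ Real.sqrt t - 1 :=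
      Real.log_le_sub_one_of_pos hspos
    have h2 : Real.log (Real.sqrt t) = Real.log t / 2 := Real.log_sqrt htpos.le
    nlinarith [sq_nonneg (Real.sqrt t - 2)]
  have hlogr : t / 2 ≤ Real.log r := by
    have hlx : Real.log x ≤ Real.log r := Real.log_le_log hxpos hxr
    have : Real.log x = t - Real.log t := by
      rw [hx_def, Real.log_div hlogn_pos.ne' htpos.ne']
    linarith
  -- r * log r ≥ log n / 2
  have hkey : Real.log n / 2 ≤ (r : ℝ) * Real.log r := by
    have h1 : x * (t / 2) ≤ (r : ℝ) * Real.log r :=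
      mul_le_mul hxr hlogr (by linarith) hrpos.le
    have h2 : x * (t / 2) = Real.log n / 2 := by
      field_simp [hx_def]
      rw [hx_def]; exact div_mul_cancel₀ _ htpos.ne'
    linarith [h1, h2.symm.le]
  -- sqrt n ≤ r^r
  have hsqrt : Real.sqrt n ≤ (r : ℝ) ^ r := by
    have h1 : ((r : ℝ) ^ r : ℝ) = Real.exp ((r : ℝ) * Real.log r) := by
      rw [← Real.rpow_natCast (r : ℝ) r, Real.rpow_def_of_pos hrpos, mul_comm]
    have hsqrtpos : 0 < Real.sqrt (n:ℝ) := Real.sqrt_pos.mpr hnpos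
    have h2 : Real.sqrt n = Real.exp (Real.log n / 2) := by
      rw [← Real.log_sqrt hnpos.le, Real.exp_log hsqrtpos]
    rw [h1, h2]
    exact Real.exp_le_exp.mpr hkey
  have hsqrtpos : 0 < Real.sqrt n := Real.sqrt_pos.mpr hnpos
  have hHL : 0 < H - L := sub_pos.mpr hLH
  have hfirst : D (r + 1) ≤ (H - L) / Real.sqrt n := by
    calc D (r + 1) ≤ D 1 / (r : ℝ) ^ r := hDr
    _ = (H - L) / (r : ℝ) ^ r := by rw [hD1]
    _ ≤ (H - L) / Real.sqrt n :=
        div_le_div_of_nonneg_left hHL.le hsqrtpos hsqrt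
  refine ⟨hfirst, fun h2 => ?_⟩
  calc D (2 * r + 1) ≤ D (r + 1) / (r : ℝ) ^ r := h2
  _ ≤ ((H - L) / Real.sqrt n) / Real.sqrt n :=
      div_le_div₀ (div_nonneg hHL.le hsqrtpos.le) hfirst hsqrtpos hsqrt
  _ = (H - L) / n := by
      rw [div_div, Real.mul_self_sqrt hnpos.le]
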